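/- arXiv:1101.3355 — 2 statements merged into one kernel-verified Lean document; each statement's English description precedes it below -/
import Mathlib

section
/- Let X be a geodesic metric space in which every geodesic segment extends to an infinite geodesic ray, let E ⊆ X be a complete convex subset isometric to the Euclidean plane, and let O ∈ X, r > 0. Then for any two points P, Q ∈ S(O, r) ∩ E, there is a path from P to Q avoiding the open ball B(O, r) of length at most (π + 2)·r. -/
open Set Metric
open scoped ENNReal NNReal

/-- A (unit-speed) geodesic segment from `x` to `y` in a metric space. -/
structure GeodesicSeg (X : Type*) [MetricSpace X] (x y : X) where
  toFun : ℝ → X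
  source : toFun 0 = x
  target : toFun (dist x y) = y
  isom : ∀ s ∈ Set.Icc (0:ℝ) (dist x y), ∀ t ∈ Set.Icc (0:ℝ) (dist x y),
    dist (toFun s) (toFun t) = |s - t|

/-- A geodesic metric space: every pair of points is joined by a geodesic. -/
def IsGeodesicSpace (X : Type*) [MetricSpace X] : Prop :=
  ∀ x y : X, Nonempty (GeodesicSeg X x y)

/-- The comparison point in the Euclidean plane at distance `s` from `p'` along
the segment from `p'` to `q'`, where `dpq` is the length of that segment. -/
noncomputable def cmpPt (p' q' : EuclideanSpace ℝ (Fin 2)) (dpq s : ℝ) :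
    EuclideanSpace ℝ (Fin 2) :=
  AffineMap.lineMap p' q' (s / dpq)

/-- `X` is CAT(0): it is geodesic, and for every geodesic triangle and every
comparison triangle in the Euclidean plane, distances between points on two
sides of the triangle are bounded by the distances between the corresponding
comparison points. -/
def IsCAT0 (X : Type*) [MetricSpace X] : Prop :=
  IsGeodesicSpace X ∧
  ∀ (p q r : X) (γ : GeodesicSeg X p q) (η : GeodesicSeg X p r)
    (p' q' r' : EuclideanSpace ℝ (Fin 2)),
    dist p' q' = dist p q → dist p' r' = dist p r → dist q' r' = dist q r →
    ∀ s ∈ Set.Icc (0:ℝ) (dist p q), ∀ t ∈ Set.Icc (0:ℝ) (dist p r),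
      dist (γ.toFun s) (η.toFun t) ≤
        dist (cmpPt p' q' (dist p q) s) (cmpPt p' r' (dist p r) t)

/-- A subset `C` is convex if every geodesic segment between points of `C`
stays in `C`. -/
def IsConvexSubset (X : Type*) [MetricSpace X] (C : Set X) : Prop :=
  ∀ x ∈ C, ∀ y ∈ C, ∀ γ : GeodesicSeg X x y,
    ∀ t ∈ Set.Icc (0:ℝ) (dist x y), γ.toFun t ∈ C

/-- `π` is the closest-point projection onto `C`: for each `x`, `π x` is the
unique point of `C` closest to `x`. -/
def IsProjOnto {X : Type*} [MetricSpace X] (C : Set X) (π : X → X) : Prop :=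
  ∀ x : X, π x ∈ C ∧ (∀ y ∈ C, dist x (π x) ≤ dist x y) ∧
    (∀ y ∈ C, dist x y = dist x (π x) → y = π x)

/-- Every nonconstant geodesic segment extends to an infinite geodesic ray. -/
def GeodesicExtension (X : Type*) [MetricSpace X] : Prop :=
  ∀ (x y : X), x ≠ y → ∀ γ : GeodesicSeg X x y,
    ∃ ρ : ℝ → X, (∀ s t : ℝ, 0 ≤ s → 0 ≤ t → dist (ρ s) (ρ t) = |s - t|) ∧
      ∀ t ∈ Set.Icc (0:ℝ) (dist x y), ρ t = γ.toFun t

lemma exp_I_lip (x y : ℝ) :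
    ‖Complex.exp (x * Complex.I) - Complex.exp (y * Complex.I)‖ ≤ |x - y| := by
  have h2 : ∀ t : ℝ, ‖Complex.exp (t * Complex.I) - 1‖ ≤ |t| := by
    intro t
    calc ‖Complex.exp (t * Complex.I) - 1‖
        = Real.sqrt ((Real.cos t - 1)^2 + (Real.sin t)^2) := by
          rw [Complex.norm_def, Complex.normSq_apply, Complex.sub_re, Complex.sub_im,
            Complex.one_re, Complex.one_im, Complex.exp_ofReal_mul_I_re,
            Complex.exp_ofReal_mul_I_im]
          ring_nf
      _ ≤ Real.sqrt (t^2) := by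
          apply Real.sqrt_le_sqrt
          nlinarith [Real.sin_sq_add_cos_sq t, Real.one_sub_sq_div_two_le_cos (x := t)]
      _ = |t| := Real.sqrt_sq_eq_abs t
  have h1 : Complex.exp (x * Complex.I) - Complex.exp (y * Complex.I)
      = Complex.exp (y * Complex.I) * (Complex.exp ((x - y : ℝ) * Complex.I) - 1) := by
    rw [mul_sub, mul_one, ← Complex.exp_add]
    push_cast
    ring_nf
  rw [h1, norm_mul, Complex.norm_exp_ofReal_mul_I, one_mul]
  exact h2 (x - y)

lemma evar_lip {Y : Type*} [PseudoEMetricSpace Y] {f : ℝ → Y} {C : NNReal} {a b : ℝ}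
    (hab : a ≤ b) (h : LipschitzOnWith C f (Set.Icc a b)) :
    eVariationOn f (Set.Icc a b) ≤ C * ENNReal.ofReal (b - a) := by
  have h1 : eVariationOn (f ∘ id) (Set.Icc a b) ≤ C * eVariationOn id (Set.Icc a b) :=
    h.comp_eVariationOn_le (Set.mapsTo_id _)
  have h2 : eVariationOn (id : ℝ → ℝ) (Set.Icc a b) ≤ ENNReal.ofReal (b - a) := by
    have := MonotoneOn.eVariationOn_le (f := (id : ℝ → ℝ)) (s := Set.Icc a b)
      (monotoneOn_id) (Set.left_mem_Icc.2 hab) (Set.right_mem_Icc.2 hab)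
    simpa using this
  calc eVariationOn f (Set.Icc a b) = eVariationOn (f ∘ id) (Set.Icc a b) := rfl
    _ ≤ C * eVariationOn id (Set.Icc a b) := h1
    _ ≤ C * ENNReal.ofReal (b - a) := mul_le_mul_right h2 _

lemma exists_min {X : Type*} [MetricSpace X] (F : ℂ → X) (hF : Isometry F) (O : X) (p : ℂ) :
    ∃ c : ℂ, ∀ z : ℂ, dist O (F c) ≤ dist O (F z) := by
  have h0 : (0:ℝ) ≤ dist O (F p) := dist_nonneg
  set R := 2 * dist O (F p) + 1 with hR
  have hcont : Continuous fun z : ℂ => dist O (F z) := continuous_const.dist hF.continuous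
  obtain ⟨c, hcK, hc⟩ := (isCompact_closedBall p R).exists_isMinOn
    ⟨p, mem_closedBall_self (by linarith)⟩ hcont.continuousOn
  refine ⟨c, fun z => ?_⟩
  by_cases hz : z ∈ closedBall p R
  · exact hc hz
  · have h1 : dist O (F c) ≤ dist O (F p) := hc (mem_closedBall_self (by linarith))
    have h2 : R < dist p z := by simpa [mem_closedBall, not_le, dist_comm] using hz
    have h3 : dist p z = dist (F p) (F z) := (hF.dist_eq p z).symm
    have h4 : dist (F p) (F z) ≤ dist (F p) O + dist O (F z) := dist_triangle _ _ _
    rw [dist_comm (F p) O] at h4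
    linarith


noncomputable def pt2 (x y : ℝ) : EuclideanSpace ℝ (Fin 2) :=
  (WithLp.equiv 2 (Fin 2 → ℝ)).symm ![x, y]

lemma dist_pt2 (x y x' y' : ℝ) :
    dist (pt2 x y) (pt2 x' y') = Real.sqrt ((x - x')^2 + (y - y')^2) := by
  rw [EuclideanSpace.dist_eq]
  simp [pt2, Fin.sum_univ_two, Real.dist_eq, sq_abs]

lemma cmpPt_pt2 (L s : ℝ) (hL : L ≠ 0) : cmpPt (pt2 0 0) (pt2 L 0) L s = pt2 s 0 := by
  unfold cmpPt pt2
  rw [AffineMap.lineMap_apply_module]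
  ext i
  fin_cases i <;>
    simp [PiLp.smul_apply, PiLp.add_apply, PiLp.sub_apply] <;> field_simp

noncomputable def segGeo {X : Type*} [MetricSpace X] (F : ℂ → X) (hF : Isometry F) (c z : ℂ)
    (hL : 0 < dist c z) : GeodesicSeg X (F c) (F z) where
  toFun s := F (AffineMap.lineMap c z (s / dist c z))
  source := by simp
  target := by
    show F (AffineMap.lineMap c z (dist (F c) (F z) / dist c z)) = F z
    rw [hF.dist_eq, div_self (ne_of_gt hL), AffineMap.lineMap_apply_one]
  isom s hs t ht := by
    show dist (F (AffineMap.lineMap c z (s / dist c z))) (F (AffineMap.lineMap c z (t / dist c z))) = |s - t|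
    rw [hF.dist_eq, dist_lineMap_lineMap, Real.dist_eq, div_sub_div_same, abs_div,
      abs_of_pos hL]
    field_simp

set_option maxHeartbeats 1000000 in
lemma key_geom {X : Type*} [MetricSpace X] (hX : IsCAT0 X)
    (F : ℂ → X) (hF : Isometry F) (O : X) (c : ℂ)
    (hmin : ∀ z : ℂ, dist O (F c) ≤ dist O (F z)) (z : ℂ) :
    (dist O (F c))^2 + (dist c z)^2 ≤ (dist O (F z))^2 ∧
      ∀ t ∈ Set.Icc (0:ℝ) 1, dist O (F (AffineMap.lineMap c z t)) ≤ dist O (F z) := by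
  have hd0 : (0:ℝ) ≤ dist O (F c) := dist_nonneg
  have hL0 : (0:ℝ) ≤ dist c z := dist_nonneg
  have hD0 : (0:ℝ) ≤ dist O (F z) := dist_nonneg
  have hdD : dist O (F c) ≤ dist O (F z) := hmin z
  rcases eq_or_lt_of_le hL0 with hL | hL
  · have hzc : c = z := by rw [← dist_eq_zero]; exact hL.symm
    subst hzc
    constructor
    · have : dist c c = 0 := dist_self c
      nlinarith
    · intro t ht
      simp [AffineMap.lineMap_same]
  · rcases eq_or_lt_of_le hd0 with hd | hd
    · -- O = F c
      have hOc : O = F c := by rw [← dist_eq_zero]; exact hd.symm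
      have hDL : dist O (F z) = dist c z := by rw [hOc, hF.dist_eq]
      constructor
      · rw [← hd]; nlinarith
      · intro t ht
        calc dist O (F (AffineMap.lineMap c z t)) = dist c (AffineMap.lineMap c z t) := by
              rw [hOc, hF.dist_eq]
          _ = |t| * dist c z := by rw [dist_left_lineMap, Real.norm_eq_abs]
          _ ≤ dist O (F z) := by
              rw [hDL, abs_of_nonneg ht.1]; nlinarith [ht.2]
    · -- main case
      set d := dist O (F c) with hd_def
      set L := dist c z with hL_def
      set D := dist O (F z) with hD_def
      have hLne : L ≠ 0 := ne_of_gt hL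
      have hFcz : dist (F c) (F z) = L := hF.dist_eq c z
      have hdη : dist (F c) O = d := dist_comm (F c) O
      set γ := segGeo F hF c z hL with hγ_def
      obtain ⟨η⟩ := hX.1 (F c) O
      have t1 : d ≤ D + L := by
        have h := dist_triangle O (F z) (F c)
        rw [dist_comm (F z) (F c), hFcz] at h
        exact h
      have t2 : D ≤ d + L := by
        have h := dist_triangle O (F c) (F z)
        rw [hFcz] at h
        exact h
      have t3 : L ≤ d + D := by
        have h := dist_triangle (F c) O (F z)
        rwa [hFcz, hdη] at h
      set a := (L^2 + d^2 - D^2) / (2*L) with ha_def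
      have h1 : 0 ≤ (L + d)^2 - D^2 := by nlinarith
      have h2 : 0 ≤ D^2 - (L - d)^2 := by nlinarith
      have hb2 : 0 ≤ d^2 - a^2 := by
        have key : d^2 - a^2 = ((L+d)^2 - D^2) * (D^2 - (L-d)^2) / (4*L^2) := by
          rw [ha_def]; field_simp; ring
        rw [key]
        apply div_nonneg (mul_nonneg h1 h2) (by positivity)
      set b := Real.sqrt (d^2 - a^2) with hb_def
      have hbsq : b^2 = d^2 - a^2 := Real.sq_sqrt hb2
      have haL : a * (2*L) = L^2 + d^2 - D^2 := by rw [ha_def]; field_simp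
      have e1 : dist (pt2 0 0) (pt2 L 0) = dist (F c) (F z) := by
        rw [dist_pt2, hFcz]
        rw [show ((0:ℝ) - L)^2 + ((0:ℝ)-0)^2 = L^2 by ring, Real.sqrt_sq hL0]
      have e2 : dist (pt2 0 0) (pt2 a b) = dist (F c) O := by
        rw [dist_pt2, hdη]
        rw [show ((0:ℝ) - a)^2 + ((0:ℝ)-b)^2 = a^2 + b^2 by ring, hbsq,
          show a^2 + (d^2 - a^2) = d^2 by ring, Real.sqrt_sq hd0]
      have e3 : dist (pt2 L 0) (pt2 a b) = dist (F z) O := by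
        rw [dist_pt2, dist_comm (F z) O]
        rw [show (L - a)^2 + ((0:ℝ)-b)^2 = L^2 - a*(2*L) + a^2 + b^2 by ring, haL, hbsq,
          show L^2 - (L^2 + d^2 - D^2) + a^2 + (d^2 - a^2) = D^2 by ring, Real.sqrt_sq hD0]
      have hcmp := hX.2 (F c) (F z) O γ η (pt2 0 0) (pt2 L 0) (pt2 a b) e1 e2 e3
      rw [hFcz, hdη] at hcmp
      have hηd : η.toFun d = O := by
        have h := η.target
        rwa [hdη] at h
      have Hs : ∀ s ∈ Set.Icc (0:ℝ) L,
          dist (F (AffineMap.lineMap c z (s / L))) O ≤ Real.sqrt ((s - a)^2 + (d^2 - a^2)) := by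
        intro s hs
        have h := hcmp s hs d ⟨hd0, le_rfl⟩
        rw [hηd, cmpPt_pt2 L s hLne,
          show cmpPt (pt2 0 0) (pt2 a b) d d = pt2 a b by
            unfold cmpPt; rw [div_self (ne_of_gt hd), AffineMap.lineMap_apply_one],
          dist_pt2] at h
        calc dist (F (AffineMap.lineMap c z (s / L))) O = dist (γ.toFun s) O := rfl
          _ ≤ Real.sqrt ((s - a)^2 + ((0:ℝ) - b)^2) := h
          _ = Real.sqrt ((s - a)^2 + (d^2 - a^2)) := by rw [show ((0:ℝ)-b)^2 = b^2 by ring, hbsq]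
      have ha : a ≤ 0 := by
        by_contra hha
        push_neg at hha
        have hmem : min a L ∈ Set.Icc (0:ℝ) L := ⟨le_min hha.le hL.le, min_le_right _ _⟩
        have h5 := Hs (min a L) hmem
        have h6 : d ≤ Real.sqrt ((min a L - a)^2 + (d^2 - a^2)) := by
          refine le_trans ?_ h5
          rw [dist_comm]
          exact hmin _
        have hE : (0:ℝ) ≤ (min a L - a)^2 + (d^2 - a^2) := by positivity
        have h7 : d^2 ≤ (min a L - a)^2 + (d^2 - a^2) := by
          nlinarith [Real.sq_sqrt hE, Real.sqrt_nonneg ((min a L - a)^2 + (d^2 - a^2))]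
        rcases le_or_gt a L with h8 | h8
        · rw [min_eq_left h8] at h7; nlinarith
        · rw [min_eq_right h8.le] at h7; nlinarith
      constructor
      · nlinarith [mul_nonneg (neg_nonneg.2 ha) hL.le]
      · intro t ht
        have hmem : t * L ∈ Set.Icc (0:ℝ) L := ⟨mul_nonneg ht.1 hL0, by nlinarith [ht.2]⟩
        have h5 := Hs (t * L) hmem
        rw [mul_div_cancel_right₀ t hLne] at h5
        rw [dist_comm O]
        refine le_trans h5 ?_
        have f1 : (0:ℝ) ≤ 1 - t := by linarith [ht.2]
        have f2 : (0:ℝ) ≤ (1 + t) * L - 2 * a := by nlinarith [ht.1]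
        have h9 : (t*L - a)^2 + (d^2 - a^2) ≤ D^2 := by
          nlinarith [mul_nonneg (mul_nonneg f1 hL0) f2]
        calc Real.sqrt ((t*L - a)^2 + (d^2 - a^2)) ≤ Real.sqrt (D^2) := Real.sqrt_le_sqrt h9
          _ = D := Real.sqrt_sq hD0


set_option maxHeartbeats 2000000 in
/-- Let `X` be a CAT(0) space with the geodesic extension property, `E ⊆ X` a
complete convex subset isometric to the Euclidean plane, `O ∈ X`, `r > 0`.
Any two points `P, Q ∈ S(O, r) ∩ E` are joined by a path avoiding the open
ball `B(O, r)` of length at most `(π + 2) * r`. -/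
theorem detour_in_flat_plane {X : Type*} [MetricSpace X]
    (hX : IsCAT0 X) (hext : GeodesicExtension X)
    (E : Set X) (hconv : IsConvexSubset X E) (hcomp : IsComplete E)
    (f : EuclideanSpace ℝ (Fin 2) → X) (hf : Isometry f) (hrange : Set.range f = E)
    (O : X) (r : ℝ) (hr : 0 < r) (P Q : X)
    (hPE : P ∈ E) (hQE : Q ∈ E) (hP : dist O P = r) (hQ : dist O Q = r) :
    ∃ γ : ℝ → X, ContinuousOn γ (Set.Icc 0 1) ∧ γ 0 = P ∧ γ 1 = Q ∧
      (∀ t ∈ Set.Icc (0:ℝ) 1, r ≤ dist O (γ t)) ∧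
      eVariationOn γ (Set.Icc 0 1) ≤ ENNReal.ofReal ((Real.pi + 2) * r) := by
  classical
  set ψ := Complex.orthonormalBasisOneI.repr with hψ_def
  set F : ℂ → X := fun w => f (ψ w) with hF_def
  have hF : Isometry F := hf.comp ψ.isometry
  obtain ⟨p0, hp0⟩ : P ∈ Set.range f := by rw [hrange]; exact hPE
  obtain ⟨q0, hq0⟩ : Q ∈ Set.range f := by rw [hrange]; exact hQE
  set p := ψ.symm p0 with hp_def
  set q := ψ.symm q0 with hq_def
  have hFp : F p = P := by
    show f (ψ (ψ.symm p0)) = P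
    rw [ψ.apply_symm_apply]; exact hp0
  have hFq : F q = Q := by
    show f (ψ (ψ.symm q0)) = Q
    rw [ψ.apply_symm_apply]; exact hq0
  obtain ⟨c, hmin⟩ := exists_min F hF O p
  have hkey := fun z : ℂ => key_geom hX F hF O c hmin z
  have hd0 : (0:ℝ) ≤ dist O (F c) := dist_nonneg
  have hdr : dist O (F c) ≤ r := by
    have h := hmin p; rwa [hFp, hP] at h
  set r' := Real.sqrt (r^2 - (dist O (F c))^2) with hr'_def
  have hr'sq : r'^2 = r^2 - (dist O (F c))^2 := Real.sq_sqrt (by nlinarith)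
  have hr'0 : (0:ℝ) ≤ r' := Real.sqrt_nonneg _
  have hr'r : r' ≤ r := by nlinarith
  have hsp : dist c p ≤ r' := by
    have h := (hkey p).1
    rw [hFp, hP] at h
    nlinarith [dist_nonneg (x := c) (y := p)]
  have hsqq : dist c q ≤ r' := by
    have h := (hkey q).1
    rw [hFq, hQ] at h
    nlinarith [dist_nonneg (x := c) (y := q)]
  have raybound : ∀ (x w : ℂ) (τ : ℝ), τ ∈ Set.Icc (0:ℝ) 1 →
      AffineMap.lineMap c w τ = x → dist O (F x) ≤ dist O (F w) := by
    intro x w τ hτ hxw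
    rw [← hxw]
    exact (hkey w).2 τ hτ
  have circbound : ∀ w : ℂ, r' ≤ dist c w → r ≤ dist O (F w) := by
    intro w hw
    have h := (hkey w).1
    nlinarith [dist_nonneg (x := O) (y := F w)]
  rcases eq_or_lt_of_le hr'0 with hr'z | hr'pos
  · -- degenerate case : P = Q, constant path
    have hpc : p = c := by
      have h1 : dist c p ≤ 0 := by rw [hr'z]; exact hsp
      have h2 : dist c p = 0 := le_antisymm h1 dist_nonneg
      exact (dist_eq_zero.1 h2).symm
    have hqc : q = c := by
      have h1 : dist c q ≤ 0 := by rw [hr'z]; exact hsqq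
      have h2 : dist c q = 0 := le_antisymm h1 dist_nonneg
      exact (dist_eq_zero.1 h2).symm
    have hQP : Q = P := by rw [← hFq, ← hFp, hpc, hqc]
    refine ⟨fun _ => P, continuousOn_const, rfl, hQP.symm, ?_, ?_⟩
    · intro t _; rw [hP]
    · have h0 : eVariationOn (fun _ : ℝ => P) (Set.Icc (0:ℝ) 1) = 0 :=
        eVariationOn.constant_on (by rintro x ⟨t, _, rfl⟩ y ⟨u, _, rfl⟩; rfl)
      rw [h0]; exact bot_le
  · -- main case
    have hpc : p ≠ c := by
      intro h
      have hdc : dist O (F c) = r := by rw [← hP, ← hFp, h]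
      nlinarith
    have hqc : q ≠ c := by
      intro h
      have hdc : dist O (F c) = r := by rw [← hQ, ← hFq, h]
      nlinarith
    obtain ⟨sP, hsP_def⟩ : ∃ sP, dist c p = sP := ⟨_, rfl⟩
    obtain ⟨sQ, hsQ_def⟩ : ∃ sQ, dist c q = sQ := ⟨_, rfl⟩
    have hsP0 : 0 < sP := by rw [← hsP_def]; exact dist_pos.2 (Ne.symm hpc)
    have hsQ0 : 0 < sQ := by rw [← hsQ_def]; exact dist_pos.2 (Ne.symm hqc)
    have hsPr' : sP ≤ r' := hsP_def ▸ hsp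
    have hsQr' : sQ ≤ r' := hsQ_def ▸ hsqq
    set uP := (p - c) / (sP : ℂ) with huP_def
    set uQ := (q - c) / (sQ : ℂ) with huQ_def
    have hsPC : (sP:ℂ) ≠ 0 := by exact_mod_cast ne_of_gt hsP0
    have hsQC : (sQ:ℂ) ≠ 0 := by exact_mod_cast ne_of_gt hsQ0
    have huP_eq : (sP:ℂ) * uP = p - c := by
      rw [huP_def, mul_comm, div_mul_cancel₀ _ hsPC]
    have huQ_eq : (sQ:ℂ) * uQ = q - c := by
      rw [huQ_def, mul_comm, div_mul_cancel₀ _ hsQC]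
    have habs_pc : ‖p - c‖ = sP := by
      rw [← Complex.dist_eq, dist_comm, hsP_def]
    have habs_qc : ‖q - c‖ = sQ := by
      rw [← Complex.dist_eq, dist_comm, hsQ_def]
    have huP_abs : ‖uP‖ = 1 := by
      rw [huP_def, norm_div, habs_pc, Complex.norm_real, Real.norm_eq_abs, abs_of_pos hsP0,
        div_self (ne_of_gt hsP0)]
    have huQ_abs : ‖uQ‖ = 1 := by
      rw [huQ_def, norm_div, habs_qc, Complex.norm_real, Real.norm_eq_abs, abs_of_pos hsQ0,
        div_self (ne_of_gt hsQ0)]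
    have huPne : uP ≠ 0 := by
      intro h; rw [h] at huP_abs; simp at huP_abs
    set δ := Complex.arg (uQ / uP) with hδ_def
    have hδpi : |δ| ≤ Real.pi := Complex.abs_arg_le_pi _
    have hexpδ : Complex.exp ((δ:ℂ) * Complex.I) = uQ / uP := by
      have hone : ‖uQ / uP‖ = 1 := by
        rw [norm_div, huP_abs, huQ_abs]; norm_num
      have h := Complex.norm_mul_exp_arg_mul_I (uQ / uP)
      rwa [hone, Complex.ofReal_one, one_mul] at h
    set p₁ := c + (r' : ℂ) * uP with hp1_def
    set q₁ := c + (r' : ℂ) * uQ with hq1_def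
    set A : ℝ → ℂ := fun t => AffineMap.lineMap p p₁ (3*t) with hA_def
    set B : ℝ → ℂ := fun t =>
      c + (r':ℂ) * uP * Complex.exp ((δ * (3*t - 1) : ℝ) * Complex.I) with hB_def
    set Cc : ℝ → ℂ := fun t => AffineMap.lineMap q₁ q (3*t - 2) with hC_def
    set g : ℝ → ℂ := fun t => if t ≤ 1/3 then A t else if t ≤ 2/3 then B t else Cc t with hg_def
    have hAt : ∀ s : ℝ, A s = c + (((1 - 3*s)*sP + (3*s)*r' : ℝ) : ℂ) * uP := by
      intro s
      show AffineMap.lineMap p p₁ (3*s) = _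
      rw [hp1_def]
      simp only [AffineMap.lineMap_apply_module, Complex.real_smul]
      push_cast
      linear_combination (3*(s:ℂ) - 1) * huP_eq
    have hCt : ∀ s : ℝ, Cc s = c + (((1 - (3*s-2))*r' + (3*s-2)*sQ : ℝ) : ℂ) * uQ := by
      intro s
      show AffineMap.lineMap q₁ q (3*s-2) = _
      rw [hq1_def]
      simp only [AffineMap.lineMap_apply_module, Complex.real_smul]
      push_cast
      linear_combination (2 - 3*(s:ℂ)) * huQ_eq
    have hAB : A (1/3) = B (1/3) := by
      rw [hAt]
      show _ = c + (r':ℂ) * uP * Complex.exp ((δ * (3*(1/3:ℝ) - 1) : ℝ) * Complex.I)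
      norm_num
    have hBC : B (2/3) = Cc (2/3) := by
      rw [hCt]
      show c + (r':ℂ) * uP * Complex.exp ((δ * (3*(2/3:ℝ) - 1) : ℝ) * Complex.I) = _
      norm_num [hexpδ]
      field_simp
    have hAcont : Continuous A := by
      show Continuous fun t : ℝ => AffineMap.lineMap p p₁ (3*t)
      exact (AffineMap.lineMap_continuous).comp (continuous_const.mul continuous_id)
    have hBcont : Continuous B := by
      show Continuous fun t : ℝ =>
        c + (r':ℂ) * uP * Complex.exp ((δ * (3*t - 1) : ℝ) * Complex.I)
      apply continuous_const.add
      apply continuous_const.mul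
      apply Complex.continuous_exp.comp
      apply Continuous.mul _ continuous_const
      exact Complex.continuous_ofReal.comp (by fun_prop)
    have hCcont : Continuous Cc := by
      show Continuous fun t : ℝ => AffineMap.lineMap q₁ q (3*t - 2)
      exact (AffineMap.lineMap_continuous).comp (by fun_prop)
    have hgcont : Continuous g := by
      show Continuous fun t : ℝ => if t ≤ 1/3 then A t else if t ≤ 2/3 then B t else Cc t
      refine Continuous.if_le hAcont ?_ continuous_id continuous_const ?_
      · exact Continuous.if_le hBcont hCcont continuous_id continuous_const
          (fun x hx => by rw [hx]; exact hBC)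
      · intro x hx
        rw [hx, if_pos (by norm_num : (1:ℝ)/3 ≤ 2/3)]
        exact hAB
    have hg0 : g 0 = p := by
      show (if (0:ℝ) ≤ 1/3 then A 0 else if (0:ℝ) ≤ 2/3 then B 0 else Cc 0) = p
      rw [if_pos (by norm_num : (0:ℝ) ≤ 1/3)]
      show AffineMap.lineMap p p₁ (3*(0:ℝ)) = p
      norm_num
    have hg1 : g 1 = q := by
      show (if (1:ℝ) ≤ 1/3 then A 1 else if (1:ℝ) ≤ 2/3 then B 1 else Cc 1) = q
      rw [if_neg (by norm_num : ¬ (1:ℝ) ≤ 1/3), if_neg (by norm_num : ¬ (1:ℝ) ≤ 2/3)]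
      show AffineMap.lineMap q₁ q (3*(1:ℝ) - 2) = q
      norm_num
    have hlow : ∀ t ∈ Set.Icc (0:ℝ) 1, r ≤ dist O (F (g t)) := by
      intro t ht
      rcases le_or_gt t (1/3) with h1 | h1
      · have hgt : g t = A t := by
          show (if t ≤ 1/3 then A t else if t ≤ 2/3 then B t else Cc t) = A t
          rw [if_pos h1]
        rw [hgt, hAt t]
        set m := (1 - 3*t)*sP + (3*t)*r' with hm_def
        have hm_ge : sP ≤ m := by nlinarith [ht.1]
        have hm0 : 0 < m := lt_of_lt_of_le hsP0 hm_ge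
        have hmC : (m:ℂ) ≠ 0 := by exact_mod_cast ne_of_gt hm0
        have hline : AffineMap.lineMap c (c + ((m:ℝ):ℂ) * uP) (sP/m) = p := by
          simp only [AffineMap.lineMap_apply_module, Complex.real_smul]
          push_cast
          field_simp
          linear_combination (m:ℂ) * huP_eq
        have hτ : sP/m ∈ Set.Icc (0:ℝ) 1 := ⟨div_nonneg hsP0.le hm0.le, (div_le_one hm0).2 hm_ge⟩
        have h := raybound p (c + ((m:ℝ):ℂ) * uP) (sP/m) hτ hline
        rw [hFp, hP] at h
        exact h
      · rcases le_or_gt t (2/3) with h2 | h2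
        · have hgt : g t = B t := by
            show (if t ≤ 1/3 then A t else if t ≤ 2/3 then B t else Cc t) = B t
            rw [if_neg (not_le.2 h1), if_pos h2]
          rw [hgt]
          apply circbound
          have hd : dist c (B t) = r' := by
            show dist c (c + (r':ℂ) * uP * Complex.exp ((δ * (3*t - 1) : ℝ) * Complex.I)) = r'
            rw [dist_comm, Complex.dist_eq, add_sub_cancel_left, norm_mul, norm_mul,
              Complex.norm_real, Real.norm_eq_abs, huP_abs, Complex.norm_exp_ofReal_mul_I, abs_of_nonneg hr'0]
            ring
          rw [hd]
        · have hgt : g t = Cc t := by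
            show (if t ≤ 1/3 then A t else if t ≤ 2/3 then B t else Cc t) = Cc t
            rw [if_neg (by linarith : ¬ t ≤ 1/3), if_neg (not_le.2 h2)]
          rw [hgt, hCt t]
          set m := (1 - (3*t-2))*r' + (3*t-2)*sQ with hm_def
          have hm_ge : sQ ≤ m := by nlinarith [ht.2]
          have hm0 : 0 < m := lt_of_lt_of_le hsQ0 hm_ge
          have hmC : (m:ℂ) ≠ 0 := by exact_mod_cast ne_of_gt hm0
          have hline : AffineMap.lineMap c (c + ((m:ℝ):ℂ) * uQ) (sQ/m) = q := by
            simp only [AffineMap.lineMap_apply_module, Complex.real_smul]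
            push_cast
            field_simp
            linear_combination (m:ℂ) * huQ_eq
          have hτ : sQ/m ∈ Set.Icc (0:ℝ) 1 :=
            ⟨div_nonneg hsQ0.le hm0.le, (div_le_one hm0).2 hm_ge⟩
          have h := raybound q (c + ((m:ℝ):ℂ) * uQ) (sQ/m) hτ hline
          rw [hFq, hQ] at h
          exact h
    -- piecewise agreement
    have eqon1 : Set.EqOn g A (Set.Icc 0 (1/3 : ℝ)) := by
      intro x hx
      show (if x ≤ 1/3 then A x else if x ≤ 2/3 then B x else Cc x) = A x
      rw [if_pos hx.2]
    have eqon2 : Set.EqOn g B (Set.Icc (1/3 : ℝ) (2/3 : ℝ)) := by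
      intro x hx
      show (if x ≤ 1/3 then A x else if x ≤ 2/3 then B x else Cc x) = B x
      by_cases hx1 : x ≤ 1/3
      · have hxe : x = 1/3 := le_antisymm hx1 hx.1
        rw [if_pos hx1, hxe]
        exact hAB
      · rw [if_neg hx1, if_pos hx.2]
    have eqon3 : Set.EqOn g Cc (Set.Icc (2/3 : ℝ) 1) := by
      intro x hx
      show (if x ≤ 1/3 then A x else if x ≤ 2/3 then B x else Cc x) = Cc x
      have hx1 : ¬ x ≤ 1/3 := by
        have := hx.1; intro h; linarith
      by_cases hx2 : x ≤ 2/3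
      · have hxe : x = 2/3 := le_antisymm hx2 hx.1
        rw [if_neg hx1, if_pos hx2, hxe]
        exact hBC
      · rw [if_neg hx1, if_neg hx2]
    have hdpp1 : dist p p₁ = r' - sP := by
      have h : p₁ - p = ((r' - sP : ℝ) : ℂ) * uP := by
        rw [hp1_def]; push_cast; linear_combination huP_eq
      rw [dist_comm, Complex.dist_eq, h, norm_mul, Complex.norm_real, Real.norm_eq_abs, huP_abs, mul_one,
        abs_of_nonneg (by linarith : (0:ℝ) ≤ r' - sP)]
    have hdq1q : dist q₁ q = r' - sQ := by
      have h : q₁ - q = ((r' - sQ : ℝ) : ℂ) * uQ := by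
        rw [hq1_def]; push_cast; linear_combination huQ_eq
      rw [Complex.dist_eq, h, norm_mul, Complex.norm_real, Real.norm_eq_abs, huQ_abs, mul_one,
        abs_of_nonneg (by linarith : (0:ℝ) ≤ r' - sQ)]
    -- Lipschitz bounds
    have lip1 : LipschitzOnWith (Real.toNNReal (3*(r' - sP))) A (Set.Icc 0 (1/3:ℝ)) := by
      apply LipschitzOnWith.of_dist_le_mul
      intro x _ y _
      apply le_of_eq
      calc dist (A x) (A y) = |3*x - 3*y| * (r' - sP) := by
            show dist (AffineMap.lineMap p p₁ (3*x)) (AffineMap.lineMap p p₁ (3*y)) = _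
            rw [dist_lineMap_lineMap, hdpp1, Real.dist_eq]
        _ = (3*(r'-sP)) * dist x y := by
            rw [Real.dist_eq, show (3*x-3*y:ℝ) = 3*(x-y) by ring, abs_mul,
              abs_of_nonneg (by norm_num : (0:ℝ) ≤ 3)]
            ring
        _ = (Real.toNNReal (3*(r'-sP)) : ℝ) * dist x y := by
            rw [Real.coe_toNNReal _ (by nlinarith : (0:ℝ) ≤ 3*(r'-sP))]
    have lip3 : LipschitzOnWith (Real.toNNReal (3*(r' - sQ))) Cc (Set.Icc (2/3:ℝ) 1) := by
      apply LipschitzOnWith.of_dist_le_mul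
      intro x _ y _
      apply le_of_eq
      calc dist (Cc x) (Cc y) = |(3*x-2) - (3*y-2)| * (r' - sQ) := by
            show dist (AffineMap.lineMap q₁ q (3*x-2)) (AffineMap.lineMap q₁ q (3*y-2)) = _
            rw [dist_lineMap_lineMap, hdq1q, Real.dist_eq]
        _ = (3*(r'-sQ)) * dist x y := by
            rw [Real.dist_eq, show ((3*x-2) - (3*y-2):ℝ) = 3*(x-y) by ring, abs_mul,
              abs_of_nonneg (by norm_num : (0:ℝ) ≤ 3)]
            ring
        _ = (Real.toNNReal (3*(r'-sQ)) : ℝ) * dist x y := by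
            rw [Real.coe_toNNReal _ (by nlinarith : (0:ℝ) ≤ 3*(r'-sQ))]
    have lip2 : LipschitzOnWith (Real.toNNReal (3*Real.pi*r')) B (Set.Icc (1/3:ℝ) (2/3:ℝ)) := by
      apply LipschitzOnWith.of_dist_le_mul
      intro x _ y _
      have hB : dist (B x) (B y) = r' * ‖
          (Complex.exp ((δ*(3*x-1) : ℝ) * Complex.I) - Complex.exp ((δ*(3*y-1) : ℝ) * Complex.I))‖ := by
        show dist (c + (r':ℂ) * uP * Complex.exp ((δ * (3*x - 1) : ℝ) * Complex.I))
          (c + (r':ℂ) * uP * Complex.exp ((δ * (3*y - 1) : ℝ) * Complex.I)) = _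
        rw [Complex.dist_eq,
          show (c + (r':ℂ)*uP*Complex.exp ((δ*(3*x-1):ℝ)*Complex.I))
            - (c + (r':ℂ)*uP*Complex.exp ((δ*(3*y-1):ℝ)*Complex.I))
            = (r':ℂ)*uP*(Complex.exp ((δ*(3*x-1):ℝ)*Complex.I)
              - Complex.exp ((δ*(3*y-1):ℝ)*Complex.I)) by ring,
          norm_mul, norm_mul, Complex.norm_real, Real.norm_eq_abs, huP_abs, abs_of_nonneg hr'0, mul_one]
      rw [hB, Real.coe_toNNReal _ (by positivity : (0:ℝ) ≤ 3*Real.pi*r')]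
      calc r' * ‖_‖ ≤ r' * |δ*(3*x-1) - δ*(3*y-1)| :=
            mul_le_mul_of_nonneg_left (exp_I_lip _ _) hr'0
        _ = r' * (|δ| * (3*|x - y|)) := by
            rw [show δ*(3*x-1) - δ*(3*y-1) = δ*(3*(x-y)) by ring, abs_mul, abs_mul,
              abs_of_nonneg (by norm_num : (0:ℝ) ≤ 3)]
        _ ≤ 3*Real.pi*r' * dist x y := by
            rw [Real.dist_eq]
            nlinarith [mul_nonneg (mul_nonneg hr'0 (abs_nonneg (x-y))) (sub_nonneg.2 hδpi),
              abs_nonneg (x - y), abs_nonneg δ]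
    -- variation of each piece
    have var1 : eVariationOn g (Set.Icc 0 (1/3:ℝ)) ≤ ENNReal.ofReal (r' - sP) := by
      rw [eVariationOn.eq_of_eqOn eqon1]
      refine (evar_lip (by norm_num : (0:ℝ) ≤ 1/3) lip1).trans ?_
      rw [show ((Real.toNNReal (3*(r'-sP))) : ℝ≥0∞) = ENNReal.ofReal (3*(r'-sP)) from rfl,
        ← ENNReal.ofReal_mul (by nlinarith : (0:ℝ) ≤ 3*(r'-sP))]
      apply ENNReal.ofReal_le_ofReal
      nlinarith
    have var3 : eVariationOn g (Set.Icc (2/3:ℝ) 1) ≤ ENNReal.ofReal (r' - sQ) := by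
      rw [eVariationOn.eq_of_eqOn eqon3]
      refine (evar_lip (by norm_num : (2:ℝ)/3 ≤ 1) lip3).trans ?_
      rw [show ((Real.toNNReal (3*(r'-sQ))) : ℝ≥0∞) = ENNReal.ofReal (3*(r'-sQ)) from rfl,
        ← ENNReal.ofReal_mul (by nlinarith : (0:ℝ) ≤ 3*(r'-sQ))]
      apply ENNReal.ofReal_le_ofReal
      nlinarith
    have var2 : eVariationOn g (Set.Icc (1/3:ℝ) (2/3:ℝ)) ≤ ENNReal.ofReal (Real.pi * r') := by
      rw [eVariationOn.eq_of_eqOn eqon2]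
      refine (evar_lip (by norm_num : (1:ℝ)/3 ≤ 2/3) lip2).trans ?_
      rw [show ((Real.toNNReal (3*Real.pi*r')) : ℝ≥0∞) = ENNReal.ofReal (3*Real.pi*r') from rfl,
        ← ENNReal.ofReal_mul (by positivity : (0:ℝ) ≤ 3*Real.pi*r')]
      apply ENNReal.ofReal_le_ofReal
      nlinarith [Real.pi_pos]
    -- splitting
    have hsplit1 := eVariationOn.Icc_add_Icc g (s := Set.Icc (0:ℝ) 1)
      (by norm_num : (0:ℝ) ≤ 1/3) (by norm_num : (1:ℝ)/3 ≤ 1)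
      (Set.mem_Icc.2 (by norm_num))
    have hsplit2 := eVariationOn.Icc_add_Icc g (s := Set.Icc (0:ℝ) 1)
      (by norm_num : (1:ℝ)/3 ≤ 2/3) (by norm_num : (2:ℝ)/3 ≤ 1)
      (Set.mem_Icc.2 (by norm_num))
    have i1 : Set.Icc (0:ℝ) 1 ∩ Set.Icc 0 (1/3) = Set.Icc (0:ℝ) (1/3) :=
      Set.inter_eq_self_of_subset_right (Set.Icc_subset_Icc le_rfl (by norm_num))
    have i2 : Set.Icc (0:ℝ) 1 ∩ Set.Icc (1/3) 1 = Set.Icc (1/3:ℝ) 1 :=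
      Set.inter_eq_self_of_subset_right (Set.Icc_subset_Icc (by norm_num) le_rfl)
    have i3 : Set.Icc (0:ℝ) 1 ∩ Set.Icc (1/3) (2/3) = Set.Icc (1/3:ℝ) (2/3) :=
      Set.inter_eq_self_of_subset_right (Set.Icc_subset_Icc (by norm_num) (by norm_num))
    have i4 : Set.Icc (0:ℝ) 1 ∩ Set.Icc (2/3) 1 = Set.Icc (2/3:ℝ) 1 :=
      Set.inter_eq_self_of_subset_right (Set.Icc_subset_Icc (by norm_num) le_rfl)
    have i0 : Set.Icc (0:ℝ) 1 ∩ Set.Icc 0 1 = Set.Icc (0:ℝ) 1 := Set.inter_self _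
    rw [i1, i2, i0] at hsplit1
    rw [i3, i4, i2] at hsplit2
    have hgvar : eVariationOn g (Set.Icc (0:ℝ) 1) ≤ ENNReal.ofReal ((Real.pi + 2) * r) := by
      rw [← hsplit1, ← hsplit2]
      have hsum : ENNReal.ofReal (r' - sP) + (ENNReal.ofReal (Real.pi * r')
          + ENNReal.ofReal (r' - sQ)) ≤ ENNReal.ofReal ((Real.pi+2)*r) := by
        rw [← ENNReal.ofReal_add (by positivity : (0:ℝ) ≤ Real.pi * r') (by linarith : (0:ℝ) ≤ r' - sQ),
          ← ENNReal.ofReal_add (by linarith : (0:ℝ) ≤ r' - sP)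
            (by nlinarith [Real.pi_pos.le, mul_nonneg Real.pi_pos.le hr'0] : (0:ℝ) ≤ Real.pi * r' + (r' - sQ))]
        apply ENNReal.ofReal_le_ofReal
        nlinarith [Real.pi_pos]
      exact le_trans (add_le_add var1 (add_le_add var2 var3)) hsum
    refine ⟨fun t => F (g t), (hF.continuous.comp hgcont).continuousOn,
      by show F (g 0) = P; rw [hg0, hFp], by show F (g 1) = Q; rw [hg1, hFq], hlow, ?_⟩
    have step0 : eVariationOn (fun t => F (g t)) (Set.Icc (0:ℝ) 1)
        ≤ eVariationOn g (Set.Icc (0:ℝ) 1) := by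
      have h := (hF.lipschitz.lipschitzOnWith (s := Set.univ)).comp_eVariationOn_le
        (Set.mapsTo_univ g (Set.Icc (0:ℝ) 1))
      simpa [Function.comp_def] using h
    exact step0.trans hgvar
end

section
/- Let X be a metric space and suppose that for every point O ∈ X and all r > 0 the detour function satisfies μ(r) ≤ q(r) for a polynomial q of degree d, and that there exist a point O and two geodesic rays γ, γ' from O such that every r-detour path between γ and γ' has length at least p(r) for a polynomial p of degree d with positive leading coefficient. Then the detour function μ of X is equivalent, under the growth-rate equivalence, to the polynomial r^d. -/
open Set Metric ENNReal

/-- The `(O, r)`-detour distance between `P` and `Q`. -/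
noncomputable def detourDist {X : Type*} [MetricSpace X] (O : X) (r : ℝ)
    (P Q : X) : ℝ≥0∞ :=
  ⨅ (γ : ℝ → X) (_ : ContinuousOn γ (Set.Icc 0 1)) (_ : γ 0 = P) (_ : γ 1 = Q)
    (_ : ∀ t ∈ Set.Icc (0:ℝ) 1, r ≤ dist O (γ t)),
    eVariationOn γ (Set.Icc 0 1)

/-- The detour function of `(X, O)`: the supremum of detour distances between
points of the sphere `S(O, r)`. -/
noncomputable def detourFun {X : Type*} [MetricSpace X] (O : X) (r : ℝ) :
    ℝ≥0∞ :=
  ⨆ (P : X) (Q : X) (_ : dist O P = r) (_ : dist O Q = r), detourDist O r P Q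

/-- `f ⪯ g` for `ℝ≥0∞`-valued functions. -/
def GrowthLE (f g : ℝ → ℝ≥0∞) : Prop :=
  ∃ A B C D E : ℝ, 0 < A ∧ 0 < B ∧ 0 < C ∧ 0 < D ∧ 0 < E ∧
    ∀ x : ℝ, 0 < x →
      f x ≤ ENNReal.ofReal A * g (B * x + C) + ENNReal.ofReal (D * x + E)

/-- `f ~ g` iff `f ⪯ g` and `g ⪯ f`. -/
def GrowthEquiv (f g : ℝ → ℝ≥0∞) : Prop := GrowthLE f g ∧ GrowthLE g f

/-- A unit-speed geodesic ray issuing from `O`. -/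
def IsRayFrom {X : Type*} [MetricSpace X] (O : X) (γ : ℝ → X) : Prop :=
  γ 0 = O ∧ ∀ s t : ℝ, 0 ≤ s → 0 ≤ t → dist (γ s) (γ t) = |s - t|

/-- If the detour function of `X` is bounded above (for every base point) by a
degree-`d` polynomial, and some pair of geodesic rays from a point `O` admits
only `r`-detour paths of length at least `p r` for a degree-`d` polynomial `p`
with positive leading coefficient, then the detour function is equivalent to
`r ^ d` under the growth-rate equivalence. -/
theorem detourFun_equiv_pow {X : Type*} [MetricSpace X] (d : ℕ)
    (q : Polynomial ℝ) (hqd : q.natDegree = d)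
    (hupper : ∀ O : X, ∀ r : ℝ, 0 < r →
      detourFun O r ≤ ENNReal.ofReal (q.eval r))
    (O : X) (γ γ' : ℝ → X) (hγ : IsRayFrom O γ) (hγ' : IsRayFrom O γ')
    (p : Polynomial ℝ) (hpd : p.natDegree = d) (hpl : 0 < p.leadingCoeff)
    (hlower : ∀ r : ℝ, 0 < r → ∀ s t : ℝ, r ≤ s → r ≤ t →
      ∀ α : ℝ → X, ContinuousOn α (Set.Icc 0 1) → α 0 = γ s → α 1 = γ' t →
        (∀ u ∈ Set.Icc (0:ℝ) 1, r ≤ dist O (α u)) →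
        ENNReal.ofReal (p.eval r) ≤ eVariationOn α (Set.Icc 0 1)) :
    GrowthEquiv (fun r => detourFun O r) (fun r => ENNReal.ofReal (r ^ d)) := by
  constructor
  · -- upper bound: detourFun ⪯ r ^ d
    set M : ℝ := ∑ i ∈ Finset.range (d + 1), |q.coeff i| with hM
    have hM0 : 0 ≤ M := Finset.sum_nonneg fun i _ => abs_nonneg _
    refine ⟨M + 1, 1, 1, 1, 1, by linarith, one_pos, one_pos, one_pos, one_pos,
      fun x hx => ?_⟩
    have hx1 : (1:ℝ) ≤ x + 1 := by linarith
    have key : q.eval x ≤ M * (x + 1) ^ d := by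
      rw [Polynomial.eval_eq_sum_range, hqd, hM, Finset.sum_mul]
      refine Finset.sum_le_sum fun i hi => ?_
      have hi' : i ≤ d := Nat.lt_succ_iff.mp (Finset.mem_range.mp hi)
      calc q.coeff i * x ^ i ≤ |q.coeff i| * x ^ i :=
            mul_le_mul_of_nonneg_right (le_abs_self _) (pow_nonneg hx.le i)
        _ ≤ |q.coeff i| * (x + 1) ^ d := by
            refine mul_le_mul_of_nonneg_left ?_ (abs_nonneg _)
            calc x ^ i ≤ (x + 1) ^ i := pow_le_pow_left₀ hx.le (by linarith) i
              _ ≤ (x + 1) ^ d := pow_le_pow_right₀ hx1 hi'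
    have hpow : (0:ℝ) ≤ (x + 1) ^ d := pow_nonneg (by linarith) d
    have h1 : q.eval x ≤ (M + 1) * (1 * x + 1) ^ d := by
      have h11 : (1:ℝ) * x + 1 = x + 1 := by ring
      rw [h11]; nlinarith
    calc detourFun O x ≤ ENNReal.ofReal (q.eval x) := hupper O x hx
      _ ≤ ENNReal.ofReal ((M + 1) * (1 * x + 1) ^ d) := ENNReal.ofReal_le_ofReal h1
      _ = ENNReal.ofReal (M + 1) * ENNReal.ofReal ((1 * x + 1) ^ d) :=
          ENNReal.ofReal_mul (by linarith)
      _ ≤ _ := le_self_add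
  · -- lower bound: r ^ d ⪯ detourFun
    obtain ⟨R, hR⟩ : ∃ R : ℝ, ∀ r ≥ R, p.leadingCoeff / 2 * r ^ d ≤ p.eval r := by
      have h := ((p.isEquivalent_atTop_lead).isLittleO.def
        (by norm_num : (0:ℝ) < 1/2)).and (Filter.eventually_ge_atTop (0:ℝ))
      obtain ⟨R, hR⟩ := Filter.eventually_atTop.mp h
      refine ⟨R, fun r hr => ?_⟩
      obtain ⟨h1, h2⟩ := hR r hr
      rw [hpd] at h1
      simp only [Pi.sub_apply, Real.norm_eq_abs] at h1
      have hlcr : |p.leadingCoeff * r ^ d| = p.leadingCoeff * r ^ d :=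
        abs_of_nonneg (by positivity)
      rw [hlcr] at h1
      have := abs_le.mp h1
      nlinarith [this.1, this.2]
    have hC : (0:ℝ) < max R 1 := lt_of_lt_of_le one_pos (le_max_right _ _)
    refine ⟨2 / p.leadingCoeff, 1, max R 1, 1, 1, by positivity, one_pos, hC,
      one_pos, one_pos, fun x hx => ?_⟩
    set r : ℝ := 1 * x + max R 1 with hrdef
    have hr0 : 0 < r := by
      have := le_max_right R 1
      simp only [hrdef, one_mul]; linarith
    have hrR : R ≤ r := by
      have := le_max_left R 1
      simp only [hrdef, one_mul]; linarith
    have hpe : p.leadingCoeff / 2 * r ^ d ≤ p.eval r := hR r hrR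
    have hxr : x ^ d ≤ r ^ d := by
      refine pow_le_pow_left₀ hx.le ?_ d
      have := le_max_right R 1
      simp only [hrdef, one_mul]; linarith
    have h3 : x ^ d ≤ 2 / p.leadingCoeff * p.eval r := by
      have heq : r ^ d = 2 / p.leadingCoeff * (p.leadingCoeff / 2 * r ^ d) := by
        field_simp
      calc x ^ d ≤ r ^ d := hxr
        _ = 2 / p.leadingCoeff * (p.leadingCoeff / 2 * r ^ d) := heq
        _ ≤ 2 / p.leadingCoeff * p.eval r :=
            mul_le_mul_of_nonneg_left hpe (by positivity)
    have hPO : dist O (γ r) = r := by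
      rw [← hγ.1, hγ.2 0 r le_rfl hr0.le, zero_sub, abs_neg, abs_of_nonneg hr0.le]
    have hQO : dist O (γ' r) = r := by
      rw [← hγ'.1, hγ'.2 0 r le_rfl hr0.le, zero_sub, abs_neg, abs_of_nonneg hr0.le]
    have hdet : ENNReal.ofReal (p.eval r) ≤ detourFun O r := by
      calc ENNReal.ofReal (p.eval r) ≤ detourDist O r (γ r) (γ' r) := by
            refine le_iInf fun α => le_iInf fun hc => le_iInf fun h0 =>
              le_iInf fun h1 => le_iInf fun hball => ?_
            exact hlower r hr0 r r le_rfl le_rfl α hc h0 h1 hball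
        _ ≤ detourFun O r :=
            le_iSup_of_le (γ r) (le_iSup_of_le (γ' r)
              (le_iSup_of_le hPO (le_iSup_of_le hQO le_rfl)))
    calc ENNReal.ofReal (x ^ d)
        ≤ ENNReal.ofReal (2 / p.leadingCoeff * p.eval r) := ENNReal.ofReal_le_ofReal h3
      _ = ENNReal.ofReal (2 / p.leadingCoeff) * ENNReal.ofReal (p.eval r) :=
          ENNReal.ofReal_mul (by positivity)
      _ ≤ ENNReal.ofReal (2 / p.leadingCoeff) * detourFun O r := mul_le_mul_right hdet _
      _ ≤ _ := le_self_add
end
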